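/- arXiv:1508.03216 — 2 statements merged into one kernel-verified Lean document; each statement's English description precedes it below -/
import Mathlib

section
/- (GLRT as a function of the maximal invariant.) Let N ≥ 2, t ≥ 1, r ≥ 1 with m := t + r < N. For z ∈ ℂ^N and S ∈ ℂ^{N×N} Hermitian positive definite, let m₁ := z_{2.3}† S_{2.3}⁻¹ z_{2.3} and m₂ := z₃† S₃₃⁻¹ z₃ be the two components of the maximal invariant, and let E_t, E_m ∈ ℂ^{N×t}, ℂ^{N×m} consist of the first t, respectively first m, standard basis vectors of ℂ^N. Then, with P_A := A(A†A)⁻¹A† for A of full column rank, (1 + z† S^{−1/2}(I_N − P_{S^{−1/2}E_t})S^{−1/2} z) / (1 + z† S^{−1/2}(I_N − P_{S^{−1/2}E_m})S^{−1/2} z) = 1 + m₁/(1 + m₂); equivalently the GLRT statistic equals 1/p₁ with p₁ := 1/(1 + m₁/(1 + m₂)). -/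
open Matrix ComplexOrder

/-- The set 𝓖 of block upper-triangular matrices (partition sizes `t`, `r`, `q = N - m`)
with invertible diagonal blocks. -/
def memG (t r q : ℕ) (G : Matrix (Fin t ⊕ Fin r ⊕ Fin q) (Fin t ⊕ Fin r ⊕ Fin q) ℂ) : Prop :=
  (∀ i j, G (Sum.inr i) (Sum.inl j) = 0) ∧
  (∀ i j, G (Sum.inr (Sum.inr i)) (Sum.inr (Sum.inl j)) = 0) ∧
  IsUnit (G.submatrix Sum.inl Sum.inl) ∧
  IsUnit (G.submatrix (Sum.inr ∘ Sum.inl) (Sum.inr ∘ Sum.inl)) ∧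
  IsUnit (G.submatrix (Sum.inr ∘ Sum.inr) (Sum.inr ∘ Sum.inr))

/-- The set 𝓕 of vectors in ℂ^N whose last `N - t` entries are zero. -/
def memF (t r q : ℕ) (f : Fin t ⊕ Fin r ⊕ Fin q → ℂ) : Prop :=
  ∀ i, f (Sum.inr i) = 0

/-- Second block (size `r`) of a partitioned vector. -/
def blk2 {t r q : ℕ} (z : Fin t ⊕ Fin r ⊕ Fin q → ℂ) : Fin r → ℂ :=
  fun i => z (Sum.inr (Sum.inl i))

/-- Third block (size `q = N - m`) of a partitioned vector. -/
def blk3 {t r q : ℕ} (z : Fin t ⊕ Fin r ⊕ Fin q → ℂ) : Fin q → ℂ :=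
  fun i => z (Sum.inr (Sum.inr i))

/-- The `(2,2)` block `S₂₂` of a partitioned matrix. -/
def S22 {t r q : ℕ} (S : Matrix (Fin t ⊕ Fin r ⊕ Fin q) (Fin t ⊕ Fin r ⊕ Fin q) ℂ) :
    Matrix (Fin r) (Fin r) ℂ :=
  S.submatrix (Sum.inr ∘ Sum.inl) (Sum.inr ∘ Sum.inl)

/-- The `(2,3)` block `S₂₃` of a partitioned matrix. -/
def S23 {t r q : ℕ} (S : Matrix (Fin t ⊕ Fin r ⊕ Fin q) (Fin t ⊕ Fin r ⊕ Fin q) ℂ) :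
    Matrix (Fin r) (Fin q) ℂ :=
  S.submatrix (Sum.inr ∘ Sum.inl) (Sum.inr ∘ Sum.inr)

/-- The `(3,2)` block `S₃₂` of a partitioned matrix. -/
def S32 {t r q : ℕ} (S : Matrix (Fin t ⊕ Fin r ⊕ Fin q) (Fin t ⊕ Fin r ⊕ Fin q) ℂ) :
    Matrix (Fin q) (Fin r) ℂ :=
  S.submatrix (Sum.inr ∘ Sum.inr) (Sum.inr ∘ Sum.inl)

/-- The `(3,3)` block `S₃₃` of a partitioned matrix. -/
def S33 {t r q : ℕ} (S : Matrix (Fin t ⊕ Fin r ⊕ Fin q) (Fin t ⊕ Fin r ⊕ Fin q) ℂ) :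
    Matrix (Fin q) (Fin q) ℂ :=
  S.submatrix (Sum.inr ∘ Sum.inr) (Sum.inr ∘ Sum.inr)

/-- `z_{2.3} = z₂ - S₂₃ S₃₃⁻¹ z₃`. -/
noncomputable def zdot {t r q : ℕ} (z : Fin t ⊕ Fin r ⊕ Fin q → ℂ)
    (S : Matrix (Fin t ⊕ Fin r ⊕ Fin q) (Fin t ⊕ Fin r ⊕ Fin q) ℂ) : Fin r → ℂ :=
  blk2 z - (S23 S * (S33 S)⁻¹) *ᵥ blk3 z

/-- `S_{2.3} = S₂₂ - S₂₃ S₃₃⁻¹ S₃₂`. -/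
noncomputable def Sdot {t r q : ℕ}
    (S : Matrix (Fin t ⊕ Fin r ⊕ Fin q) (Fin t ⊕ Fin r ⊕ Fin q) ℂ) :
    Matrix (Fin r) (Fin r) ℂ :=
  S22 S - S23 S * (S33 S)⁻¹ * S32 S

/-- The maximal invariant
`t₁(z,S) = (z_{2.3}† S_{2.3}⁻¹ z_{2.3}, z₃† S₃₃⁻¹ z₃)` for the case `m < N`. -/
noncomputable def t1 {t r q : ℕ} (z : Fin t ⊕ Fin r ⊕ Fin q → ℂ)
    (S : Matrix (Fin t ⊕ Fin r ⊕ Fin q) (Fin t ⊕ Fin r ⊕ Fin q) ℂ) : ℂ × ℂ :=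
  (star (zdot z S) ⬝ᵥ ((Sdot S)⁻¹ *ᵥ zdot z S),
   star (blk3 z) ⬝ᵥ ((S33 S)⁻¹ *ᵥ blk3 z))

/-- `E_t`: the matrix of the first `t` standard basis vectors of ℂ^N, `N = t + r + q`. -/
def Et (t r q : ℕ) : Matrix (Fin t ⊕ Fin r ⊕ Fin q) (Fin t) ℂ :=
  Matrix.of fun i j => if i = Sum.inl j then 1 else 0

/-- `E_m`: the matrix of the first `m = t + r` standard basis vectors of ℂ^N. -/
def Em (t r q : ℕ) : Matrix (Fin t ⊕ Fin r ⊕ Fin q) (Fin t ⊕ Fin r) ℂ :=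
  Matrix.of fun i j => if i = Sum.map id Sum.inl j then 1 else 0

/-- The orthogonal projection `P_A = A (A† A)⁻¹ A†` onto the column space of `A`. -/
noncomputable def proj {n : Type*} {k : Type*} [Fintype n] [Fintype k] [DecidableEq n]
    [DecidableEq k] (A : Matrix n k ℂ) : Matrix n n ℂ :=
  A * (Aᴴ * A)⁻¹ * Aᴴ


section Helpers

variable {k m n : Type*} [Fintype k] [Fintype m] [Fintype n] [DecidableEq k] [DecidableEq m]
  [DecidableEq n]

/-- Indicator/embedding matrix whose columns are standard basis vectors `e j`. -/
def ind {k n : Type*} [DecidableEq n] (e : k → n) : Matrix n k ℂ :=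
  Matrix.of fun i j => if i = e j then 1 else 0

lemma mul_ind (M : Matrix m n ℂ) (e : k → n) : M * ind e = M.submatrix id e := by
  ext i j; simp [ind, Matrix.mul_apply]

lemma ind_conjTranspose_mul (e : k → n) (M : Matrix n m ℂ) : (ind e)ᴴ * M = M.submatrix e id := by
  ext i j; simp [ind, Matrix.mul_apply, conjTranspose_apply]

lemma ind_mulVec (e : k → n) (he : Function.Injective e) (x : k → ℂ) (j : k) :
    (ind e *ᵥ x) (e j) = x j := by
  simp only [ind, mulVec, dotProduct, Matrix.of_apply]
  rw [Finset.sum_eq_single j]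
  · simp
  · intro b _ hb
    rw [if_neg (fun h => hb (he h.symm)), zero_mul]
  · simp

lemma posDef_submatrix_inj {S : Matrix n n ℂ} (hS : S.PosDef) (e : k → n)
    (he : Function.Injective e) : (S.submatrix e e).PosDef := by
  rw [posDef_iff_dotProduct_mulVec]
  constructor
  · ext i j
    simpa [conjTranspose_apply] using congrFun (congrFun hS.1 (e i)) (e j)
  · intro x hx
    have key : S.submatrix e e = (ind e)ᴴ * S * ind e := by
      rw [Matrix.mul_assoc, mul_ind, ind_conjTranspose_mul]
      ext i j; simp
    have hy : ind e *ᵥ x ≠ 0 := by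
      intro h
      apply hx
      ext j
      have := congrFun h (e j)
      rwa [ind_mulVec e he] at this
    have := hS.dotProduct_mulVec_pos hy
    rw [key, ← mulVec_mulVec, ← mulVec_mulVec, dotProduct_mulVec, ← star_mulVec]
    exact this

lemma canon {α β : Type*} [Fintype α] [Fintype β] [DecidableEq α] [DecidableEq β]
    (S : Matrix (α ⊕ β) (α ⊕ β) ℂ) (hS : S.PosDef) :
    S⁻¹ - (S⁻¹).submatrix id Sum.inl * ((S⁻¹).submatrix Sum.inl Sum.inl)⁻¹ *
        (S⁻¹).submatrix Sum.inl id =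
      fromBlocks 0 0 0 ((S.submatrix Sum.inr Sum.inr)⁻¹) := by
  have hT : (S⁻¹).PosDef := hS.inv
  set T := S⁻¹ with hTdef
  set A := T.toBlocks₁₁ with hA
  set B := T.toBlocks₁₂ with hB
  set C := T.toBlocks₂₁ with hC
  set D := T.toBlocks₂₂ with hD
  have hAsub : A = T.submatrix Sum.inl Sum.inl := rfl
  have hApd : A.PosDef := hAsub ▸ posDef_submatrix_inj hT Sum.inl Sum.inl_injective
  haveI invA : Invertible A := hApd.isUnit.invertible
  haveI invT : Invertible T := hT.isUnit.invertible
  haveI invFB : Invertible (fromBlocks A B C D) := invT.copy _ (fromBlocks_toBlocks T)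
  haveI invSchur : Invertible (D - C * ⅟A * B) := invertibleOfFromBlocks₁₁Invertible A B C D
  have claim1 : T.submatrix id Sum.inl * A⁻¹ * T.submatrix Sum.inl id =
      fromBlocks (A*A⁻¹*A) (A*A⁻¹*B) (C*A⁻¹*A) (C*A⁻¹*B) := by
    ext (i|i) (j|j) <;>
      simp [Matrix.mul_apply, fromBlocks, toBlocks₁₁, toBlocks₁₂, toBlocks₂₁, toBlocks₂₂,
        hA, hB, hC, hD]
  have hSrr : S.submatrix Sum.inr Sum.inr = (D - C * A⁻¹ * B)⁻¹ := by
    have hS_eq : S = T⁻¹ := by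
      rw [hTdef, Matrix.nonsing_inv_nonsing_inv S ((Matrix.isUnit_iff_isUnit_det S).mp hS.isUnit)]
    have hTinv : T⁻¹ = fromBlocks (⅟A + ⅟A * B * ⅟(D - C*⅟A*B) * C * ⅟A)
        (-(⅟A * B * ⅟(D - C*⅟A*B))) (-(⅟(D - C*⅟A*B) * C * ⅟A)) (⅟(D - C*⅟A*B)) := by
      conv_lhs => rw [← fromBlocks_toBlocks T]
      rw [← invOf_eq_nonsing_inv, invOf_fromBlocks₁₁_eq]
    have : S.submatrix Sum.inr Sum.inr = (T⁻¹).toBlocks₂₂ := by rw [← hS_eq]; rfl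
    rw [this, hTinv]
    simp [toBlocks₂₂, fromBlocks, invOf_eq_nonsing_inv]
    rfl
  haveI invS2 : Invertible (D - C * A⁻¹ * B) := by
    rwa [← invOf_eq_nonsing_inv A]
  rw [← hAsub, claim1, Matrix.mul_inv_of_invertible, Matrix.one_mul, Matrix.one_mul, hSrr,
    Matrix.inv_inv_of_invertible]
  conv_lhs => rw [← fromBlocks_toBlocks T]
  ext (i|i) (j|j) <;> simp [fromBlocks, hA, hB, hC, hD, Matrix.sub_apply]

set_option maxHeartbeats 1000000 in
lemma decomp {α β : Type*} [Fintype α] [Fintype β] [DecidableEq α] [DecidableEq β]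
    (M : Matrix (α ⊕ β) (α ⊕ β) ℂ) (hM : M.PosDef) (x : α → ℂ) (y : β → ℂ) :
    star (Sum.elim x y) ⬝ᵥ (M⁻¹ *ᵥ Sum.elim x y) =
      star (x - (M.toBlocks₁₂ * (M.toBlocks₂₂)⁻¹) *ᵥ y) ⬝ᵥ
        ((M.toBlocks₁₁ - M.toBlocks₁₂ * (M.toBlocks₂₂)⁻¹ * M.toBlocks₂₁)⁻¹ *ᵥ
          (x - (M.toBlocks₁₂ * (M.toBlocks₂₂)⁻¹) *ᵥ y)) +
      star y ⬝ᵥ ((M.toBlocks₂₂)⁻¹ *ᵥ y) := by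
  set A := M.toBlocks₁₁ with hA
  set B := M.toBlocks₁₂ with hB
  set D := M.toBlocks₂₂ with hD
  have hC : M.toBlocks₂₁ = Bᴴ := by
    ext i j
    simpa [toBlocks₂₁, toBlocks₁₂, conjTranspose_apply, hB] using
      (congrFun (congrFun hM.1 (Sum.inr i)) (Sum.inl j)).symm
  have hMeq : M = fromBlocks A B Bᴴ D := by
    rw [← hC, hA, hB, hD]; exact (fromBlocks_toBlocks M).symm
  have hDpd : D.PosDef := posDef_submatrix_inj hM Sum.inr Sum.inr_injective
  have hApd : A.PosDef := posDef_submatrix_inj hM Sum.inl Sum.inl_injective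
  haveI invD : Invertible D := hDpd.isUnit.invertible
  haveI invM : Invertible M := hM.isUnit.invertible
  haveI invFB : Invertible (fromBlocks A B Bᴴ D) := invM.copy _ hMeq.symm
  haveI invSchur : Invertible (A - B * ⅟D * Bᴴ) := invertibleOfFromBlocks₂₂Invertible A B Bᴴ D
  haveI invSchur' : Invertible (A - B * D⁻¹ * Bᴴ) := by rwa [← invOf_eq_nonsing_inv D]
  set Δ := A - B * D⁻¹ * Bᴴ with hΔ
  have hΔherm : Δ.IsHermitian := hApd.1.sub (isHermitian_mul_mul_conjTranspose B hDpd.1.inv)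
  have hDi : (D⁻¹)ᴴ = D⁻¹ := hDpd.1.inv
  have hΔi : (Δ⁻¹)ᴴ = Δ⁻¹ := hΔherm.inv
  have hMinv : M⁻¹ = fromBlocks Δ⁻¹ (-(Δ⁻¹ * B * D⁻¹)) (-(D⁻¹ * Bᴴ * Δ⁻¹))
      (D⁻¹ + D⁻¹ * Bᴴ * Δ⁻¹ * B * D⁻¹) := by
    rw [hMeq, ← invOf_eq_nonsing_inv, invOf_fromBlocks₂₂_eq]
    simp only [invOf_eq_nonsing_inv, hΔ]
  rw [hMinv]
  simp only [fromBlocks_mulVec, Function.star_sumElim, sumElim_dotProduct_sumElim,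
    Matrix.neg_mulVec, mulVec_add, dotProduct_add, dotProduct_neg, add_mulVec,
    mulVec_sub, dotProduct_sub, sub_dotProduct, star_sub, star_mulVec,
    dotProduct_mulVec, vecMul_vecMul, conjTranspose_mul, hDi, hΔi,
    conjTranspose_conjTranspose, Matrix.mul_assoc, hC, Sum.elim_comp_inl, Sum.elim_comp_inr,
    Matrix.add_vecMul, Matrix.smul_vecMul, smul_dotProduct, smul_smul]
  simp only [Matrix.sub_vecMul, sub_dotProduct, vecMul_vecMul, ← Matrix.mul_assoc, ← hΔ]
  abel

lemma projStep (S R : Matrix n n ℂ) (hR : Rᴴ = R) (hRS : R * R = S⁻¹) (e : k → n) :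
    R * (1 - proj (R * ind e)) * R =
      S⁻¹ - (S⁻¹).submatrix id e * ((S⁻¹).submatrix e e)⁻¹ * (S⁻¹).submatrix e id := by
  have h1 : (R * ind e)ᴴ * (R * ind e) = (S⁻¹).submatrix e e := by
    rw [conjTranspose_mul, hR, Matrix.mul_assoc, ← Matrix.mul_assoc R R, hRS, mul_ind,
      ind_conjTranspose_mul, submatrix_submatrix]
    simp
  rw [proj, h1, Matrix.mul_sub, Matrix.sub_mul, Matrix.mul_one, hRS, conjTranspose_mul, hR]
  congr 1
  rw [← mul_ind, ← ind_conjTranspose_mul, ← hRS]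
  simp only [Matrix.mul_assoc]

lemma quadBlocks {α β : Type*} [Fintype α] [Fintype β] (X : Matrix β β ℂ) (z : α ⊕ β → ℂ) :
    star z ⬝ᵥ ((fromBlocks 0 0 0 X : Matrix (α ⊕ β) (α ⊕ β) ℂ) *ᵥ z) =
      star (z ∘ Sum.inr) ⬝ᵥ (X *ᵥ (z ∘ Sum.inr)) := by
  simp [dotProduct, mulVec, Fintype.sum_sum_type, fromBlocks, Function.comp]

lemma main_quad {α β : Type*} [Fintype α] [Fintype β] [DecidableEq α] [DecidableEq β]
    (σ : α ⊕ β ≃ n) (S : Matrix n n ℂ) (hS : S.PosDef) (R : Matrix n n ℂ)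
    (hR : Rᴴ = R) (hRS : R * R = S⁻¹) (z : n → ℂ) :
    star z ⬝ᵥ ((R * (1 - proj (R * ind (⇑σ ∘ Sum.inl))) * R) *ᵥ z) =
      star (z ∘ ⇑σ ∘ Sum.inr) ⬝ᵥ
        ((S.submatrix (⇑σ ∘ Sum.inr) (⇑σ ∘ Sum.inr))⁻¹ *ᵥ (z ∘ ⇑σ ∘ Sum.inr)) := by
  rw [projStep S R hR hRS]
  set T := S⁻¹ with hT
  set e : α → n := ⇑σ ∘ Sum.inl with he
  have hS' : (S.submatrix σ σ).PosDef := posDef_submatrix_inj hS σ σ.injective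
  have hT' : (S.submatrix σ σ)⁻¹ = T.submatrix σ σ := by
    rw [Matrix.inv_submatrix_equiv S σ σ]
  have step : T - T.submatrix id e * (T.submatrix e e)⁻¹ * T.submatrix e id =
      ((T.submatrix σ σ) - (T.submatrix σ σ).submatrix id Sum.inl *
        ((T.submatrix σ σ).submatrix Sum.inl Sum.inl)⁻¹ *
        (T.submatrix σ σ).submatrix Sum.inl id).submatrix σ.symm σ.symm := by
    have h2 : (T.submatrix σ σ).submatrix Sum.inl Sum.inl = T.submatrix e e := by
      rw [submatrix_submatrix]
    rw [h2]
    ext i j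
    simp only [submatrix_apply, Matrix.sub_apply, Matrix.mul_apply, Equiv.apply_symm_apply,
      Finset.sum_congr, id_eq]
    rfl
  rw [step]
  have hcanon := canon (S.submatrix σ σ) hS'
  rw [hT'] at hcanon
  rw [hcanon]
  have hsub : (S.submatrix σ σ).submatrix Sum.inr Sum.inr =
      S.submatrix (⇑σ ∘ Sum.inr) (⇑σ ∘ Sum.inr) := by rw [submatrix_submatrix]
  rw [hsub]
  rw [submatrix_mulVec_equiv _ _ _ σ.symm]
  simp only [Equiv.symm_symm]
  rw [dotProduct_comp_equiv_symm _ _ σ]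
  have hstar : star z ∘ ⇑σ = star (z ∘ ⇑σ) := rfl
  rw [hstar, quadBlocks]
  rfl

end Helpers

/-- GLRT as a function of the maximal invariant: with `m₁`, `m₂` the two components of
the maximal invariant and `R = S^{-1/2}` the Hermitian positive definite inverse square
root of `S`,
`(1 + z†S^{-1/2}(I − P_{S^{-1/2}E_t})S^{-1/2}z) / (1 + z†S^{-1/2}(I − P_{S^{-1/2}E_m})S^{-1/2}z)
  = 1 + m₁/(1 + m₂) = 1/p₁` with `p₁ = 1/(1 + m₁/(1 + m₂))`. -/
theorem stmt8 (t r q : ℕ) (ht : 1 ≤ t) (hr : 1 ≤ r) (hq : 1 ≤ q)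
    (z : Fin t ⊕ Fin r ⊕ Fin q → ℂ)
    (S : Matrix (Fin t ⊕ Fin r ⊕ Fin q) (Fin t ⊕ Fin r ⊕ Fin q) ℂ) (hS : S.PosDef)
    (R : Matrix (Fin t ⊕ Fin r ⊕ Fin q) (Fin t ⊕ Fin r ⊕ Fin q) ℂ)
    (hR : R.PosDef) (hRS : R * R = S⁻¹) :
    (1 + star z ⬝ᵥ ((R * (1 - proj (R * Et t r q)) * R) *ᵥ z)) /
        (1 + star z ⬝ᵥ ((R * (1 - proj (R * Em t r q)) * R) *ᵥ z)) =
      1 + (t1 z S).1 / (1 + (t1 z S).2) ∧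
    (1 + star z ⬝ᵥ ((R * (1 - proj (R * Et t r q)) * R) *ᵥ z)) /
        (1 + star z ⬝ᵥ ((R * (1 - proj (R * Em t r q)) * R) *ᵥ z)) =
      1 / (1 / (1 + (t1 z S).1 / (1 + (t1 z S).2))) := by
  classical
  have hRH : Rᴴ = R := hR.1
  -- numerator quadratic form
  have hNum : star z ⬝ᵥ ((R * (1 - proj (R * Et t r q)) * R) *ᵥ z) =
      star (z ∘ Sum.inr) ⬝ᵥ
        ((S.submatrix (Sum.inr : Fin r ⊕ Fin q → _) Sum.inr)⁻¹ *ᵥ (z ∘ Sum.inr)) := by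
    have hEt : Et t r q = ind (⇑(Equiv.refl (Fin t ⊕ (Fin r ⊕ Fin q))) ∘ Sum.inl) := by
      rw [Equiv.coe_refl]; rfl
    have := main_quad (Equiv.refl (Fin t ⊕ (Fin r ⊕ Fin q))) S hS R hRH hRS z
    rw [hEt]
    simpa [Equiv.coe_refl] using this
  -- denominator quadratic form
  set σm := Equiv.sumAssoc (Fin t) (Fin r) (Fin q) with hσm
  have hDen : star z ⬝ᵥ ((R * (1 - proj (R * Em t r q)) * R) *ᵥ z) = (t1 z S).2 := by
    have hEm : Em t r q = ind (⇑σm ∘ Sum.inl) := by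
      have hmap : (Sum.map id Sum.inl : Fin t ⊕ Fin r → Fin t ⊕ (Fin r ⊕ Fin q)) =
          ⇑σm ∘ Sum.inl := by funext x; cases x <;> rfl
      rw [Em, ind, ← hmap]
    have hinr : ⇑σm ∘ (Sum.inr : Fin q → (Fin t ⊕ Fin r) ⊕ Fin q) =
        Sum.inr ∘ Sum.inr := by funext x; rfl
    have := main_quad σm S hS R hRH hRS z
    rw [hEm, this, hinr]
    rfl
  -- decompose the numerator into the two components of the maximal invariant
  have hM2pd : (Matrix.submatrix S (Sum.inr : Fin r ⊕ Fin q → _) Sum.inr).PosDef :=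
    posDef_submatrix_inj hS Sum.inr Sum.inr_injective
  have helim : Sum.elim (blk2 z) (blk3 z) = z ∘ Sum.inr := by
    funext i; cases i <;> rfl
  have hsplit : star (z ∘ Sum.inr) ⬝ᵥ
      ((S.submatrix (Sum.inr : Fin r ⊕ Fin q → _) Sum.inr)⁻¹ *ᵥ (z ∘ Sum.inr)) =
      (t1 z S).1 + (t1 z S).2 := by
    have := decomp (S.submatrix (Sum.inr : Fin r ⊕ Fin q → _) Sum.inr) hM2pd (blk2 z) (blk3 z)
    rw [helim] at this
    rw [this]
    rfl
  -- nonnegativity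
  have hm2 : (0 : ℂ) ≤ (t1 z S).2 := by
    have h33 : (S33 S).PosDef := by
      have : S33 S = S.submatrix (Sum.inr ∘ Sum.inr) (Sum.inr ∘ Sum.inr) := rfl
      rw [this]
      exact posDef_submatrix_inj hS _ (Sum.inr_injective.comp Sum.inr_injective)
    exact h33.inv.posSemidef.dotProduct_mulVec_nonneg (blk3 z)
  have hsumnn : (0 : ℂ) ≤ (t1 z S).1 + (t1 z S).2 := by
    rw [← hsplit]
    exact hM2pd.inv.posSemidef.dotProduct_mulVec_nonneg (z ∘ Sum.inr)
  have hden : (1 : ℂ) + (t1 z S).2 ≠ 0 :=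
    (lt_of_lt_of_le zero_lt_one (le_add_of_nonneg_right hm2)).ne'
  have hnum : (1 : ℂ) + ((t1 z S).1 + (t1 z S).2) ≠ 0 :=
    (lt_of_lt_of_le zero_lt_one (le_add_of_nonneg_right hsumnn)).ne'
  rw [hNum, hDen, hsplit]
  have key : (1 + ((t1 z S).1 + (t1 z S).2)) / (1 + (t1 z S).2) =
      1 + (t1 z S).1 / (1 + (t1 z S).2) := by
    field_simp
    ring
  constructor
  · exact key
  · rw [key, one_div_one_div]
end

section
/- (2S-GLRT as a function of the maximal invariant.) Let N ≥ 2, t ≥ 1, r ≥ 1 with m := t + r < N, z ∈ ℂ^N, and S ∈ ℂ^{N×N} Hermitian positive definite. With E_t, E_m the matrices of the first t, respectively first m, standard basis vectors of ℂ^N and P_A := A(A†A)⁻¹A†, the two-step GLRT statistic satisfies z† S^{−1/2}(I_N − P_{S^{−1/2}E_t})S^{−1/2} z − z† S^{−1/2}(I_N − P_{S^{−1/2}E_m})S^{−1/2} z = z_{2.3}† S_{2.3}⁻¹ z_{2.3} = m₁; equivalently it equals (1 − p₁)/(p₁p₂) with p₁ := 1/(1 + m₁/(1 + m₂)), p₂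 := 1/(1 + m₂), m₂ := z₃† S₃₃⁻¹ z₃. -/
open Matrix ComplexOrder

set_option linter.unusedSectionVars false
section AuxHelpers


section Helpers
variable {α β : Type*} [Fintype α] [Fintype β] [DecidableEq α] [DecidableEq β]

lemma quad_submatrix {m n : Type*} [Fintype m] [Fintype n]
    (M : Matrix n n ℂ) (e : m ≃ n) (x : m → ℂ) :
    star x ⬝ᵥ ((M.submatrix e e) *ᵥ x) = star (x ∘ e.symm) ⬝ᵥ (M *ᵥ (x ∘ e.symm)) := by
  rw [submatrix_mulVec_equiv]
  simp only [dotProduct, Pi.star_apply, Function.comp_apply]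
  exact Fintype.sum_equiv e _ _ (fun i => by simp)

lemma posDef_submatrix_equiv {m n : Type*} [Fintype m] [Fintype n] [DecidableEq m] [DecidableEq n]
    (e : m ≃ n) {M : Matrix n n ℂ} (hM : M.PosDef) : (M.submatrix e e).PosDef := by
  refine PosDef.of_dotProduct_mulVec_pos ((isHermitian_submatrix_equiv e).2 hM.1) (fun x hx => ?_)
  rw [quad_submatrix]
  refine hM.dotProduct_mulVec_pos (fun h => hx ?_)
  ext i
  simpa using congrFun h (e i)

lemma posDef_toBlocks₁₁ {M : Matrix (α ⊕ β) (α ⊕ β) ℂ} (hM : M.PosDef) :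
    (M.toBlocks₁₁).PosDef := by
  refine PosDef.of_dotProduct_mulVec_pos (hM.1.submatrix Sum.inl) (fun x hx => ?_)
  have h := hM.dotProduct_mulVec_pos (x := Sum.elim x 0) (by
    simp only [ne_eq, funext_iff, not_forall] at hx ⊢
    obtain ⟨i, hi⟩ := hx
    exact ⟨Sum.inl i, hi⟩)
  rw [← fromBlocks_toBlocks M] at h
  simpa [fromBlocks_mulVec, Function.star_sumElim, sumElim_dotProduct_sumElim] using h

lemma posDef_toBlocks₂₂ {M : Matrix (α ⊕ β) (α ⊕ β) ℂ} (hM : M.PosDef) :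
    (M.toBlocks₂₂).PosDef := by
  refine PosDef.of_dotProduct_mulVec_pos (hM.1.submatrix Sum.inr) (fun x hx => ?_)
  have h := hM.dotProduct_mulVec_pos (x := Sum.elim 0 x) (by
    simp only [ne_eq, funext_iff, not_forall] at hx ⊢
    obtain ⟨i, hi⟩ := hx
    exact ⟨Sum.inr i, hi⟩)
  rw [← fromBlocks_toBlocks M] at h
  simpa [fromBlocks_mulVec, Function.star_sumElim, sumElim_dotProduct_sumElim] using h

end Helpers



section Key
variable {α β : Type*} [Fintype α] [Fintype β] [DecidableEq α] [DecidableEq β]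

/-- the selection matrix of the first block -/
def Esel (α β : Type*) [DecidableEq α] [DecidableEq β] : Matrix (α ⊕ β) α ℂ :=
  Matrix.of fun i j => if i = Sum.inl j then 1 else 0

lemma conjTranspose_Esel_mul {γ : Type*} (M : Matrix (α ⊕ β) γ ℂ) :
    (Esel α β)ᴴ * M = M.submatrix Sum.inl id := by
  ext i j
  simp [mul_apply, Esel, conjTranspose_apply, apply_ite (star : ℂ → ℂ), ite_mul,
    Fintype.sum_sum_type]

lemma mul_Esel {γ : Type*} [Fintype γ] (M : Matrix γ (α ⊕ β) ℂ) :
    M * Esel α β = M.submatrix id Sum.inl := by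
  ext i j
  simp [mul_apply, Esel, mul_ite, Fintype.sum_sum_type]

lemma keylemma (S : Matrix (α ⊕ β) (α ⊕ β) ℂ) (hS : S.PosDef) (z : α ⊕ β → ℂ)
    (R : Matrix (α ⊕ β) (α ⊕ β) ℂ) (hR : R.PosDef) (hRS : R * R = S⁻¹) :
    star z ⬝ᵥ ((R * (1 - proj (R * Esel α β)) * R) *ᵥ z)
      = star (z ∘ Sum.inr) ⬝ᵥ ((S.toBlocks₂₂)⁻¹ *ᵥ (z ∘ Sum.inr)) := by
  classical
  set E := Esel α β with hE
  set T : Matrix α α ℂ := Eᴴ * S⁻¹ * E with hTdef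
  have hSi : (S⁻¹).PosDef := hS.inv
  have hT : T.PosDef := by
    have h1 : T = (S⁻¹).toBlocks₁₁ := by
      rw [hTdef, hE, Matrix.mul_assoc, mul_Esel, conjTranspose_Esel_mul]
      ext i j; simp [toBlocks₁₁]
    rw [h1]
    exact posDef_toBlocks₁₁ hSi
  have hD : (S.toBlocks₂₂).PosDef := posDef_toBlocks₂₂ hS
  set X : Matrix (α ⊕ β) (α ⊕ β) ℂ := S⁻¹ - S⁻¹ * E * T⁻¹ * (Eᴴ * S⁻¹) with hXdef
  -- step 1 : the matrix in the statement is X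
  have hXeq : R * (1 - proj (R * E)) * R = X := by
    have hRH : (R * E)ᴴ = Eᴴ * R := by rw [conjTranspose_mul, hR.1.eq]
    have hmid : (R * E)ᴴ * (R * E) = T := by
      rw [hRH, hTdef, ← hRS]
      simp only [Matrix.mul_assoc]
    rw [proj, hmid, hRH, hXdef, ← hRS]
    rw [Matrix.mul_sub, Matrix.sub_mul, Matrix.mul_one]
    congr 1
    simp only [Matrix.mul_assoc]
  rw [hXeq]
  -- entrywise facts
  have hTT : T * T⁻¹ = 1 := Matrix.mul_nonsing_inv _ (Matrix.isUnit_iff_isUnit_det _ |>.mp hT.isUnit)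
  have hTT' : T⁻¹ * T = 1 := Matrix.nonsing_inv_mul _ (Matrix.isUnit_iff_isUnit_det _ |>.mp hT.isUnit)
  have hSS : S⁻¹ * S = 1 := Matrix.nonsing_inv_mul _ (Matrix.isUnit_iff_isUnit_det _ |>.mp hS.isUnit)
  have fact1 : Eᴴ * X = 0 := by
    rw [hXdef, Matrix.mul_sub]
    have h2 : Eᴴ * (S⁻¹ * E * T⁻¹ * (Eᴴ * S⁻¹)) = T * (T⁻¹ * (Eᴴ * S⁻¹)) := by
      rw [hTdef]; simp only [Matrix.mul_assoc]
    rw [h2, ← Matrix.mul_assoc, hTT, Matrix.one_mul, sub_self]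
  have fact2 : X * E = 0 := by
    rw [hXdef, Matrix.sub_mul]
    have h2 : S⁻¹ * E * T⁻¹ * (Eᴴ * S⁻¹) * E = S⁻¹ * E * (T⁻¹ * T) := by
      rw [hTdef]; simp only [Matrix.mul_assoc]
    rw [h2, hTT', Matrix.mul_one, sub_self]
  have fact3 : X * S = 1 - S⁻¹ * E * T⁻¹ * Eᴴ := by
    rw [hXdef, Matrix.sub_mul, hSS]
    congr 1
    calc S⁻¹ * E * T⁻¹ * (Eᴴ * S⁻¹) * S = S⁻¹ * E * T⁻¹ * Eᴴ * (S⁻¹ * S) := by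
          simp only [Matrix.mul_assoc]
    _ = S⁻¹ * E * T⁻¹ * Eᴴ := by rw [hSS, Matrix.mul_one]
  rw [hE] at fact1 fact2
  rw [conjTranspose_Esel_mul] at fact1
  rw [mul_Esel] at fact2
  have hrow : ∀ i j, X (Sum.inl i) j = 0 := fun i j => congrFun (congrFun fact1 i) j
  have hcol : ∀ i j, X i (Sum.inl j) = 0 := fun i j => congrFun (congrFun fact2 i) j
  -- X₂₂ is a left inverse of D
  have hX22 : (S.toBlocks₂₂)⁻¹ = X.submatrix Sum.inr Sum.inr := by
    refine Matrix.inv_eq_left_inv ?_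
    ext i j
    have h3 := congrFun (congrFun fact3 (Sum.inr i)) (Sum.inr j)
    have hr : (X * S) (Sum.inr i) (Sum.inr j)
        = (X.submatrix Sum.inr Sum.inr * S.toBlocks₂₂) i j := by
      simp only [mul_apply, Fintype.sum_sum_type, submatrix_apply, toBlocks₂₂, of_apply]
      rw [Finset.sum_eq_zero (fun k _ => by rw [hcol]; ring), zero_add]
    have hrhs : ((1 : Matrix (α ⊕ β) (α ⊕ β) ℂ) - S⁻¹ * E * T⁻¹ * Eᴴ) (Sum.inr i) (Sum.inr j)
        = (1 : Matrix β β ℂ) i j := by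
      simp [Matrix.sub_apply, mul_apply, Esel, hE, conjTranspose_apply, one_apply]
    rw [hr, hrhs] at h3
    exact h3
  rw [hX22]
  -- final quadratic form computation
  have hv : X *ᵥ z = Sum.elim (0 : α → ℂ) ((X.submatrix Sum.inr Sum.inr) *ᵥ (z ∘ Sum.inr)) := by
    ext i
    cases i with
    | inl i => simp [mulVec, dotProduct, Fintype.sum_sum_type, hrow]
    | inr i => simp [mulVec, dotProduct, Fintype.sum_sum_type, hcol]
  rw [hv]
  simp [dotProduct, Fintype.sum_sum_type]

end Key


section Decomp
variable {α β : Type*} [Fintype α] [Fintype β] [DecidableEq α] [DecidableEq β]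

lemma sigma_posDef {M : Matrix (α ⊕ β) (α ⊕ β) ℂ} (hM : M.PosDef) :
    (M.toBlocks₁₁ - M.toBlocks₁₂ * (M.toBlocks₂₂)⁻¹ * M.toBlocks₂₁).PosDef := by
  classical
  set A := M.toBlocks₁₁
  set B := M.toBlocks₁₂
  set D := M.toBlocks₂₂ with hDdef
  have hD : D.PosDef := posDef_toBlocks₂₂ hM
  have hC : M.toBlocks₂₁ = Bᴴ := by
    ext i j
    simpa [toBlocks₂₁, B, toBlocks₁₂, conjTranspose_apply] using
      (congrFun (congrFun hM.1.eq (Sum.inr i)) (Sum.inl j)).symm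
  rw [hC]
  haveI : Invertible D := hD.isUnit.invertible
  refine PosDef.of_dotProduct_mulVec_pos ?_ ?_
  · refine (hM.1.submatrix Sum.inl).sub ?_
    have h2 : (B * D⁻¹ * Bᴴ).IsHermitian := isHermitian_mul_mul_conjTranspose B (hD.inv).1
    exact h2
  · intro x hx
    have hM' : fromBlocks A B Bᴴ D = M := by rw [← hC]; exact fromBlocks_toBlocks M
    have hsc := schur_complement_eq₂₂ A B x (-((D⁻¹ * Bᴴ) *ᵥ x)) hD.1
    rw [hM'] at hsc
    have hv : (D⁻¹ * Bᴴ) *ᵥ x + -((D⁻¹ * Bᴴ) *ᵥ x) = 0 := by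
      funext i; simp
    rw [hv] at hsc
    have hpos := hM.dotProduct_mulVec_pos (x := Sum.elim x (-((D⁻¹ * Bᴴ) *ᵥ x))) (by
      simp only [ne_eq, funext_iff, not_forall] at hx ⊢
      obtain ⟨i, hi⟩ := hx
      exact ⟨Sum.inl i, hi⟩)
    rw [Matrix.dotProduct_mulVec, hsc] at hpos
    simpa [Matrix.dotProduct_mulVec] using hpos

lemma quad_inv_decomp {M : Matrix (α ⊕ β) (α ⊕ β) ℂ} (hM : M.PosDef) (w : α ⊕ β → ℂ) :
    star w ⬝ᵥ (M⁻¹ *ᵥ w) =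
      star ((w ∘ Sum.inl) - (M.toBlocks₁₂ * (M.toBlocks₂₂)⁻¹) *ᵥ (w ∘ Sum.inr)) ⬝ᵥ
        ((M.toBlocks₁₁ - M.toBlocks₁₂ * (M.toBlocks₂₂)⁻¹ * M.toBlocks₂₁)⁻¹ *ᵥ
          ((w ∘ Sum.inl) - (M.toBlocks₁₂ * (M.toBlocks₂₂)⁻¹) *ᵥ (w ∘ Sum.inr))) +
      star (w ∘ Sum.inr) ⬝ᵥ ((M.toBlocks₂₂)⁻¹ *ᵥ (w ∘ Sum.inr)) := by
  classical
  set A := M.toBlocks₁₁ with hAdef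
  set B := M.toBlocks₁₂ with hBdef
  set D := M.toBlocks₂₂ with hDdef
  have hD : D.PosDef := posDef_toBlocks₂₂ hM
  have hC : M.toBlocks₂₁ = Bᴴ := by
    ext i j
    simpa [toBlocks₂₁, hBdef, toBlocks₁₂, conjTranspose_apply] using
      (congrFun (congrFun hM.1.eq (Sum.inr i)) (Sum.inl j)).symm
  have hSg : (A - B * D⁻¹ * Bᴴ).PosDef := by
    rw [← hC]; exact sigma_posDef hM
  set Sg := A - B * D⁻¹ * Bᴴ with hSgdef
  have hDD : D * D⁻¹ = 1 :=
    Matrix.mul_nonsing_inv _ (Matrix.isUnit_iff_isUnit_det _ |>.mp hD.isUnit)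
  have hSgSg : Sg * Sg⁻¹ = 1 :=
    Matrix.mul_nonsing_inv _ (Matrix.isUnit_iff_isUnit_det _ |>.mp hSg.isUnit)
  set L : Matrix (α ⊕ β) (α ⊕ β) ℂ := fromBlocks 1 (-(B * D⁻¹)) 0 1 with hLdef
  set Δ : Matrix (α ⊕ β) (α ⊕ β) ℂ := fromBlocks Sg⁻¹ 0 0 D⁻¹ with hΔdef
  have hLH : Lᴴ = fromBlocks 1 0 (-(D⁻¹ * Bᴴ)) 1 := by
    rw [hLdef, fromBlocks_conjTranspose]
    simp [conjTranspose_nonsing_inv, hD.1.eq]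
  have hMinv : M⁻¹ = Lᴴ * Δ * L := by
    refine Matrix.inv_eq_right_inv ?_
    have hM' : M = fromBlocks A B Bᴴ D := by rw [← hC]; exact (fromBlocks_toBlocks M).symm
    have e1 : M * Lᴴ = fromBlocks Sg B 0 D := by
      rw [hM', hLH, fromBlocks_multiply]
      refine fromBlocks_inj.mpr ⟨?_, by simp, ?_, by simp⟩
      · simp [hSgdef, Matrix.mul_assoc, sub_eq_add_neg]
      · simp [← Matrix.mul_assoc, hDD]
    have e2 : fromBlocks Sg B 0 D * Δ = fromBlocks 1 (B * D⁻¹) 0 1 := by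
      rw [hΔdef, fromBlocks_multiply]
      refine fromBlocks_inj.mpr ⟨by simp [hSgSg], by simp, by simp, by simp [hDD]⟩
    calc M * (Lᴴ * Δ * L) = (M * Lᴴ) * Δ * L := by simp only [Matrix.mul_assoc]
    _ = fromBlocks 1 (B * D⁻¹) 0 1 * L := by rw [e1, e2]
    _ = 1 := by
        rw [hLdef, fromBlocks_multiply, ← fromBlocks_one]
        exact fromBlocks_inj.mpr ⟨by simp, by simp, by simp, by simp⟩
  rw [hMinv, ← mulVec_mulVec, ← mulVec_mulVec, Matrix.dotProduct_mulVec, ← star_mulVec]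
  have hLw : L *ᵥ w = Sum.elim ((w ∘ Sum.inl) - (B * D⁻¹) *ᵥ (w ∘ Sum.inr)) (w ∘ Sum.inr) := by
    funext i
    cases i with
    | inl i =>
        simp [hLdef, mulVec, dotProduct, Fintype.sum_sum_type, one_apply, ite_mul,
          sub_eq_add_neg]
    | inr i =>
        simp [hLdef, mulVec, dotProduct, Fintype.sum_sum_type, one_apply, ite_mul]
  rw [hLw]
  rw [hΔdef, fromBlocks_mulVec]
  simp only [zero_mulVec, add_zero, zero_add]
  rw [Function.star_sumElim, sumElim_dotProduct_sumElim]
  rw [hC]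
  simp [Sg]



lemma proj_submatrix {m n k : Type*} [Fintype m] [Fintype n] [Fintype k]
    [DecidableEq m] [DecidableEq n] [DecidableEq k] (A : Matrix n k ℂ) (e : m ≃ n) :
    proj (A.submatrix ⇑e id) = (proj A).submatrix ⇑e ⇑e := by
  have h1 : (A.submatrix ⇑e id)ᴴ * (A.submatrix ⇑e id) = Aᴴ * A := by
    rw [conjTranspose_submatrix, ← submatrix_mul Aᴴ A id ⇑e id e.bijective, submatrix_id_id]
  have h2 := submatrix_mul A (Aᴴ * A)⁻¹ ⇑e id id Function.bijective_id
  rw [submatrix_id_id] at h2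
  have h3 := submatrix_mul (A * (Aᴴ * A)⁻¹) Aᴴ ⇑e id ⇑e Function.bijective_id
  unfold proj
  rw [h1, conjTranspose_submatrix, ← h2, ← h3]


end Decomp
end AuxHelpers

/-- 2S-GLRT as a function of the maximal invariant: with `m₁`, `m₂` the two components
of the maximal invariant, `p₁ = 1/(1 + m₁/(1 + m₂))`, `p₂ = 1/(1 + m₂)`, and
`R = S^{-1/2}` the Hermitian positive definite inverse square root of `S`,
`z†S^{-1/2}(I − P_{S^{-1/2}E_t})S^{-1/2}z − z†S^{-1/2}(I − P_{S^{-1/2}E_m})S^{-1/2}z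
  = m₁ = (1 − p₁)/(p₁ p₂)`. -/
theorem stmt9 (t r q : ℕ) (ht : 1 ≤ t) (hr : 1 ≤ r) (hq : 1 ≤ q)
    (z : Fin t ⊕ Fin r ⊕ Fin q → ℂ)
    (S : Matrix (Fin t ⊕ Fin r ⊕ Fin q) (Fin t ⊕ Fin r ⊕ Fin q) ℂ) (hS : S.PosDef)
    (R : Matrix (Fin t ⊕ Fin r ⊕ Fin q) (Fin t ⊕ Fin r ⊕ Fin q) ℂ)
    (hR : R.PosDef) (hRS : R * R = S⁻¹) :
    star z ⬝ᵥ ((R * (1 - proj (R * Et t r q)) * R) *ᵥ z) -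
        star z ⬝ᵥ ((R * (1 - proj (R * Em t r q)) * R) *ᵥ z) =
      (t1 z S).1 ∧
    star z ⬝ᵥ ((R * (1 - proj (R * Et t r q)) * R) *ᵥ z) -
        star z ⬝ᵥ ((R * (1 - proj (R * Em t r q)) * R) *ᵥ z) =
      (1 - 1 / (1 + (t1 z S).1 / (1 + (t1 z S).2))) /
        ((1 / (1 + (t1 z S).1 / (1 + (t1 z S).2))) * (1 / (1 + (t1 z S).2))) := by
  classical
  set a := Equiv.sumAssoc (Fin t) (Fin r) (Fin q) with hadef
  set S' := S.submatrix ⇑a ⇑a with hS'def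
  set R' := R.submatrix ⇑a ⇑a with hR'def
  set z' : (Fin t ⊕ Fin r) ⊕ Fin q → ℂ := z ∘ ⇑a with hz'def
  have hS' : S'.PosDef := posDef_submatrix_equiv a hS
  have hR' : R'.PosDef := posDef_submatrix_equiv a hR
  have hR'S' : R' * R' = S'⁻¹ := by
    rw [hR'def, hS'def, submatrix_mul_equiv, hRS, inv_submatrix_equiv]
  -- the E_t term
  have hEt : Et t r q = Esel (Fin t) (Fin r ⊕ Fin q) := rfl
  have h_t := keylemma S hS z R hR hRS
  rw [← hEt] at h_t
  -- the E_m term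
  have h_m := keylemma S' hS' z' R' hR' hR'S'
  have hEmE : Em t r q = (Esel (Fin t ⊕ Fin r) (Fin q)).submatrix ⇑a.symm id := by
    ext i j
    simp only [Em, Esel, of_apply, submatrix_apply, id_eq, Equiv.symm_apply_eq]
    cases j <;> rfl
  have hterm_m : star z ⬝ᵥ ((R * (1 - proj (R * Em t r q)) * R) *ᵥ z) =
      star z' ⬝ᵥ ((R' * (1 - proj (R' * Esel (Fin t ⊕ Fin r) (Fin q))) * R') *ᵥ z') := by
    have hR0 : R = R'.submatrix ⇑a.symm ⇑a.symm := by
      rw [hR'def]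
      ext i j
      simp
    rw [hEmE]
    conv_lhs => rw [hR0]
    rw [submatrix_mul_equiv R' (Esel (Fin t ⊕ Fin r) (Fin q)) ⇑a.symm a.symm id]
    rw [proj_submatrix (R' * Esel (Fin t ⊕ Fin r) (Fin q)) a.symm]
    have hone : (1 : Matrix (Fin t ⊕ Fin r ⊕ Fin q) (Fin t ⊕ Fin r ⊕ Fin q) ℂ) -
        (proj (R' * Esel (Fin t ⊕ Fin r) (Fin q))).submatrix ⇑a.symm ⇑a.symm =
        ((1 : Matrix ((Fin t ⊕ Fin r) ⊕ Fin q) ((Fin t ⊕ Fin r) ⊕ Fin q) ℂ) -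
          proj (R' * Esel (Fin t ⊕ Fin r) (Fin q))).submatrix ⇑a.symm ⇑a.symm := by
      ext i j
      simp [one_apply, Matrix.sub_apply]
    rw [hone]
    rw [submatrix_mul_equiv R' _ ⇑a.symm a.symm ⇑a.symm,
      submatrix_mul_equiv _ R' ⇑a.symm a.symm ⇑a.symm]
    rw [quad_submatrix _ a.symm z]
    simp [hz'def]
  rw [hterm_m] at *
  -- now decompose the E_t term
  set M := S.toBlocks₂₂ with hMdef
  have hM : M.PosDef := posDef_toBlocks₂₂ hS
  have hdec := quad_inv_decomp hM (z ∘ Sum.inr)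
  have hu : (z ∘ Sum.inr) ∘ Sum.inl - (M.toBlocks₁₂ * (M.toBlocks₂₂)⁻¹) *ᵥ ((z ∘ Sum.inr) ∘ Sum.inr)
      = zdot z S := rfl
  have hSg : M.toBlocks₁₁ - M.toBlocks₁₂ * (M.toBlocks₂₂)⁻¹ * M.toBlocks₂₁ = Sdot S := rfl
  have hS33 : M.toBlocks₂₂ = S33 S := rfl
  rw [hu, hSg, hS33] at hdec
  have hSdotPD : (Sdot S).PosDef := by rw [← hSg]; exact sigma_posDef hM
  have hS33PD : (S33 S).PosDef := by rw [← hS33]; exact posDef_toBlocks₂₂ hM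
  -- identify terms of t1
  have hm1 : (t1 z S).1 = star (zdot z S) ⬝ᵥ ((Sdot S)⁻¹ *ᵥ zdot z S) := rfl
  have hm2 : (t1 z S).2 = star (blk3 z) ⬝ᵥ ((S33 S)⁻¹ *ᵥ blk3 z) := rfl
  have hblk3 : (z ∘ Sum.inr) ∘ Sum.inr = blk3 z := rfl
  have hblk3' : z' ∘ Sum.inr = blk3 z := rfl
  have hS'33 : S'.toBlocks₂₂ = S33 S := rfl
  rw [hblk3] at hdec
  rw [hblk3', hS'33] at h_m
  have hfirst : star z ⬝ᵥ ((R * (1 - proj (R * Et t r q)) * R) *ᵥ z) -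
      star z' ⬝ᵥ ((R' * (1 - proj (R' * Esel (Fin t ⊕ Fin r) (Fin q))) * R') *ᵥ z') =
      (t1 z S).1 := by
    rw [h_t, h_m, hdec, hm1]
    ring
  refine ⟨hfirst, ?_⟩
  rw [hfirst]
  -- arithmetic with nonneg reals
  have hm1nn : 0 ≤ (t1 z S).1 := by
    rw [hm1]; exact hSdotPD.inv.posSemidef.dotProduct_mulVec_nonneg _
  have hm2nn : 0 ≤ (t1 z S).2 := by
    rw [hm2]; exact hS33PD.inv.posSemidef.dotProduct_mulVec_nonneg _
  rw [Complex.nonneg_iff] at hm1nn hm2nn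
  have e1 : (t1 z S).1 = ((t1 z S).1.re : ℂ) := by
    apply Complex.ext <;> simp [hm1nn.2.symm]
  have e2 : (t1 z S).2 = ((t1 z S).2.re : ℂ) := by
    apply Complex.ext <;> simp [hm2nn.2.symm]
  rw [e1, e2]
  set x := (t1 z S).1.re
  set y := (t1 z S).2.re
  have hy1 : (0:ℝ) < 1 + y := by linarith [hm2nn.1]
  have hx1 : (0:ℝ) < 1 + x / (1 + y) := by
    have := div_nonneg hm1nn.1 hy1.le
    linarith
  have habs : ∀ c : ℝ, c ≠ 0 → (1 - 1/c)/((1/c)*(1/(1+y))) = (c - 1)*(1+y) := by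
    intro c hc
    field_simp
  have hreal : x = (1 - 1 / (1 + x / (1 + y))) / ((1 / (1 + x / (1 + y))) * (1 / (1 + y))) := by
    rw [habs _ hx1.ne', add_sub_cancel_left, div_mul_cancel₀ _ hy1.ne']
  exact_mod_cast hreal
end
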